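/- Let B be a separable real Banach space and {x_k}_{k=1}^∞ a sequence in B with x_k ≠ 0 for every k that is dense in the closed unit ball {x ∈ B : ‖x‖ ≤ 1}. Then there exists a map T : B → ℓ¹ (the Banach space of absolutely summable real sequences) such that: (a) T is injective and is a homeomorphism of B onto its image T(B) ⊆ ℓ¹ (T is continuous and its inverse on T(B) is continuous); and (b) for every x ∈ B, x = Σ_{k=1}^∞ (Tx)_k·x_k, where the partial sums converge to x in the norm of B. -/

import Mathlib

open Filter Metric
open scoped ENNReal NNReal
set_option synthInstance.maxHeartbeats 1000000
set_option maxHeartbeats 1600000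

section Aux

variable {B : Type*} [NormedAddCommGroup B] [NormedSpace ℝ B]

/-- Retraction of `B` onto its closed unit ball. -/
noncomputable def ballRetr (v : B) : B := (max ‖v‖ 1)⁻¹ • v

lemma maxnorm_pos (v : B) : (0 : ℝ) < max ‖v‖ 1 :=
  lt_of_lt_of_le one_pos (le_max_right _ _)

lemma norm_ballRetr_le (v : B) : ‖ballRetr v‖ ≤ 1 := by
  rw [ballRetr, norm_smul, norm_inv, Real.norm_eq_abs, abs_of_pos (maxnorm_pos v),
    inv_mul_eq_div]
  exact (div_le_one (maxnorm_pos v)).2 (le_max_left _ _)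

lemma ballRetr_eq {v : B} (h : ‖v‖ ≤ 1) : ballRetr v = v := by
  rw [ballRetr, max_eq_right h, inv_one, one_smul]

lemma continuous_ballRetr : Continuous (ballRetr : B → B) :=
  ((continuous_norm.max continuous_const).inv₀ fun v => (maxnorm_pos v).ne').smul continuous_id

variable (x : ℕ → B)

/-- The raw "partition of unity"-style coefficients. -/
noncomputable def coefF (v : B) (k : ℕ) : ℝ :=
  ((2 : ℝ) ^ k)⁻¹ * max 0 (2⁻¹ - ‖ballRetr v - x k‖)

lemma coefF_nonneg (v : B) (k : ℕ) : 0 ≤ coefF x v k :=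
  mul_nonneg (by positivity) (le_max_left _ _)

lemma coefF_le (v : B) (k : ℕ) : coefF x v k ≤ ((2 : ℝ) ^ k)⁻¹ := by
  rw [coefF]
  have h1 : max 0 (2⁻¹ - ‖ballRetr v - x k‖) ≤ 1 := by
    apply max_le (by norm_num)
    have := norm_nonneg (ballRetr v - x k)
    linarith
  calc ((2:ℝ)^k)⁻¹ * max 0 (2⁻¹ - ‖ballRetr v - x k‖) ≤ ((2:ℝ)^k)⁻¹ * 1 := by
        apply mul_le_mul_of_nonneg_left h1 (by positivity)
    _ = ((2:ℝ)^k)⁻¹ := mul_one _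

lemma summable_geom_inv : Summable fun k : ℕ => ((2 : ℝ) ^ k)⁻¹ := by
  simp_rw [← inv_pow]
  exact summable_geometric_of_lt_one (by norm_num) (by norm_num)

lemma summable_coefF (v : B) : Summable (coefF x v) :=
  Summable.of_nonneg_of_le (coefF_nonneg x v) (coefF_le x v) summable_geom_inv

lemma continuous_coefF (k : ℕ) : Continuous fun v : B => coefF x v k := by
  apply Continuous.mul continuous_const
  exact (continuous_const.max
    (continuous_const.sub ((continuous_ballRetr.sub continuous_const).norm)))

lemma memℓp_one_coefF (v : B) : Memℓp (coefF x v) 1 := by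
  apply memℓp_gen
  have : (fun k => ‖coefF x v k‖ ^ (1 : ℝ≥0∞).toReal) = coefF x v := by
    funext k
    simp [Real.norm_eq_abs, abs_of_nonneg (coefF_nonneg x v k)]
  rw [this]
  exact summable_coefF x v

/-- The raw coefficients, as an element of `ℓ¹`. -/
noncomputable def PhiMap (v : B) : lp (fun _ : ℕ => ℝ) 1 := ⟨coefF x v, memℓp_one_coefF x v⟩

@[simp] lemma PhiMap_apply (v : B) (k : ℕ) : PhiMap x v k = coefF x v k := rfl

/-- The normalizing factor. -/
noncomputable def psiMap (v : B) : ℝ := ∑' k, coefF x v k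

lemma continuous_psiMap : Continuous (psiMap x) := by
  apply continuous_tsum (fun k => continuous_coefF x k) summable_geom_inv
  intro k v
  rw [Real.norm_eq_abs, abs_of_nonneg (coefF_nonneg x v k)]
  exact coefF_le x v k

lemma psiMap_pos (hd : closure (Set.range x) = Metric.closedBall (0 : B) 1) (v : B) :
    0 < psiMap x v := by
  have hball : ballRetr v ∈ closure (Set.range x) := by
    rw [hd, Metric.mem_closedBall, dist_zero_right]
    exact norm_ballRetr_le v
  obtain ⟨y, hy, hdist⟩ := Metric.mem_closure_iff.1 hball 2⁻¹ (by norm_num)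
  obtain ⟨k, rfl⟩ := hy
  have hpos : 0 < coefF x v k := by
    apply mul_pos (by positivity)
    rw [lt_max_iff]
    right
    rw [dist_eq_norm] at hdist
    linarith
  exact lt_of_lt_of_le hpos
    (Summable.le_tsum (summable_coefF x v) k fun j _ => coefF_nonneg x v j)

lemma summable_norm_lp (f : lp (fun _ : ℕ => ℝ) 1) : Summable fun k => ‖f k‖ := by
  have := (lp.memℓp f).summable (p := 1) (by norm_num)
  simpa using this

lemma norm_lp_eq_tsum (f : lp (fun _ : ℕ => ℝ) 1) : ‖f‖ = ∑' k, ‖f k‖ := by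
  rw [lp.norm_eq_tsum_rpow (by norm_num : 0 < (1 : ℝ≥0∞).toReal) f]
  simp [ENNReal.toReal_one, Real.rpow_one]

lemma norm_PhiMap (v : B) : ‖PhiMap x v‖ = psiMap x v := by
  rw [norm_lp_eq_tsum, psiMap]
  exact tsum_congr fun k => by
    simp [Real.norm_eq_abs, abs_of_nonneg (coefF_nonneg x v k)]

lemma continuous_PhiMap : Continuous (PhiMap x) := by
  have key : ∀ v : B, PhiMap x v =
      ∑' k, coefF x v k • (lp.single 1 k (1 : ℝ) : lp (fun _ : ℕ => ℝ) 1) := by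
    intro v
    have h := lp.hasSum_single (E := fun _ : ℕ => ℝ) (p := (1 : ℝ≥0∞))
      (by norm_num) (PhiMap x v)
    have h2 : (fun k : ℕ => lp.single 1 k (PhiMap x v k))
        = fun k : ℕ => coefF x v k • (lp.single 1 k (1 : ℝ) : lp (fun _ : ℕ => ℝ) 1) := by
      funext k
      rw [← lp.single_smul]
      norm_num
    rw [h2] at h
    exact h.tsum_eq.symm
  have : Continuous fun v : B => ∑' k, coefF x v k • (lp.single 1 k (1 : ℝ) : lp (fun _ : ℕ => ℝ) 1) := by
    apply continuous_tsum
      (fun k => (continuous_coefF x k).fun_smul continuous_const) summable_geom_inv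
    intro k v
    rw [norm_smul, lp.norm_single (E := fun _ : ℕ => ℝ) (by norm_num : (0 : ℝ≥0∞) < 1)]
    simp only [norm_one, mul_one, Real.norm_eq_abs, abs_of_nonneg (coefF_nonneg x v k)]
    exact coefF_le x v k
  simpa [← key] using this

/-- The normalized coefficients. -/
noncomputable def coefMap (v : B) : lp (fun _ : ℕ => ℝ) 1 := (psiMap x v)⁻¹ • PhiMap x v

lemma norm_coefMap (hd : closure (Set.range x) = Metric.closedBall (0 : B) 1) (v : B) :
    ‖coefMap x v‖ = 1 := by
  rw [coefMap, norm_smul, norm_PhiMap, norm_inv, Real.norm_eq_abs,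
    abs_of_pos (psiMap_pos x hd v), inv_mul_cancel₀ (psiMap_pos x hd v).ne']

lemma continuous_coefMap (hd : closure (Set.range x) = Metric.closedBall (0 : B) 1) :
    Continuous (coefMap x) :=
  ((continuous_psiMap x).inv₀ fun v => (psiMap_pos x hd v).ne').smul (continuous_PhiMap x)

variable [CompleteSpace B]

lemma summable_smul_x (hx1 : ∀ k, ‖x k‖ ≤ 1) (f : lp (fun _ : ℕ => ℝ) 1) :
    Summable fun k => f k • x k := by
  apply Summable.of_norm
  apply Summable.of_nonneg_of_le (fun k => norm_nonneg _) _ (summable_norm_lp f)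
  intro k
  rw [norm_smul]
  calc ‖f k‖ * ‖x k‖ ≤ ‖f k‖ * 1 :=
        mul_le_mul_of_nonneg_left (hx1 k) (norm_nonneg _)
    _ = ‖f k‖ := mul_one _

/-- The continuous linear "summation" map `ℓ¹ → B`, `c ↦ ∑ cₖ xₖ`. -/
noncomputable def sumMap (hx1 : ∀ k, ‖x k‖ ≤ 1) : lp (fun _ : ℕ => ℝ) 1 →L[ℝ] B :=
  LinearMap.mkContinuous
    { toFun := fun f => ∑' k, f k • x k
      map_add' := fun f g => by
        have hf := summable_smul_x x hx1 f
        have hg := summable_smul_x x hx1 g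
        have : (fun k => (↑(f + g) : ∀ _ : ℕ, ℝ) k • x k)
            = fun k => f k • x k + g k • x k := by
          funext k
          rw [lp.coeFn_add]
          simp [add_smul]
        simp only [this]
        exact hf.tsum_add hg
      map_smul' := fun a f => by
        have hf := summable_smul_x x hx1 f
        have : (fun k => (↑(a • f) : ∀ _ : ℕ, ℝ) k • x k)
            = fun k => a • (f k • x k) := by
          funext k
          rw [lp.coeFn_smul]
          simp [smul_smul]
        simp only [this, RingHom.id_apply]
        exact hf.tsum_const_smul a }
    1
    (fun f => by
      simp only [LinearMap.coe_mk, AddHom.coe_mk, one_mul]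
      have h1 : Summable fun k => ‖f k • x k‖ := by
        apply Summable.of_nonneg_of_le (fun k => norm_nonneg _) _ (summable_norm_lp f)
        intro k
        rw [norm_smul]
        calc ‖f k‖ * ‖x k‖ ≤ ‖f k‖ * 1 :=
              mul_le_mul_of_nonneg_left (hx1 k) (norm_nonneg _)
          _ = ‖f k‖ := mul_one _
      calc ‖∑' k, f k • x k‖ ≤ ∑' k, ‖f k • x k‖ := norm_tsum_le_tsum_norm h1
        _ ≤ ∑' k, ‖f k‖ := by
            apply Summable.tsum_le_tsum _ h1 (summable_norm_lp f)
            intro k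
            rw [norm_smul]
            calc ‖f k‖ * ‖x k‖ ≤ ‖f k‖ * 1 :=
                  mul_le_mul_of_nonneg_left (hx1 k) (norm_nonneg _)
              _ = ‖f k‖ := mul_one _
        _ = ‖f‖ := (norm_lp_eq_tsum f).symm)

lemma sumMap_apply (hx1 : ∀ k, ‖x k‖ ≤ 1) (f : lp (fun _ : ℕ => ℝ) 1) :
    sumMap x hx1 f = ∑' k, f k • x k := rfl

/-- The one-step approximation estimate. -/
lemma key_step (hd : closure (Set.range x) = Metric.closedBall (0 : B) 1)
    (hx1 : ∀ k, ‖x k‖ ≤ 1) (v : B) (hv : ‖v‖ ≤ 1) :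
    ‖v - sumMap x hx1 (coefMap x v)‖ ≤ 2⁻¹ := by
  have hψ : 0 < psiMap x v := psiMap_pos x hd v
  have hπ : ballRetr v = v := ballRetr_eq hv
  -- pointwise estimate
  have hpt : ∀ k, coefF x v k * ‖v - x k‖ ≤ coefF x v k * 2⁻¹ := by
    intro k
    rcases (coefF_nonneg x v k).eq_or_lt with h | h
    · rw [← h]; simp
    · apply mul_le_mul_of_nonneg_left _ (coefF_nonneg x v k)
      have hmax : 0 < max 0 (2⁻¹ - ‖ballRetr v - x k‖) := by
        by_contra hcon
        push_neg at hcon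
        have : max 0 (2⁻¹ - ‖ballRetr v - x k‖) = 0 :=
          le_antisymm hcon (le_max_left _ _)
        rw [coefF, this, mul_zero] at h
        exact lt_irrefl _ h
      rw [lt_max_iff] at hmax
      rcases hmax with h' | h'
      · exact absurd h' (lt_irrefl 0)
      · rw [hπ] at h'; linarith
  have hsum1n : Summable fun k => ‖coefF x v k • (v - x k)‖ := by
    apply Summable.of_nonneg_of_le (fun k => norm_nonneg _) _
      ((summable_coefF x v).mul_right 2⁻¹)
    intro k
    rw [norm_smul, Real.norm_eq_abs, abs_of_nonneg (coefF_nonneg x v k)]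
    exact hpt k
  have hsum1 : Summable fun k => coefF x v k • (v - x k) := Summable.of_norm hsum1n
  have hsum2 : Summable fun k => coefF x v k • v := (summable_coefF x v).smul_const v
  have hsum3 : Summable fun k => coefF x v k • x k := by
    have := summable_smul_x x hx1 (PhiMap x v)
    simpa using this
  -- rewrite the difference
  have hS : sumMap x hx1 (coefMap x v) = (psiMap x v)⁻¹ • ∑' k, coefF x v k • x k := by
    rw [coefMap, map_smul, sumMap_apply]
    rfl
  have hw : (psiMap x v) • (v - sumMap x hx1 (coefMap x v))
      = ∑' k, coefF x v k • (v - x k) := by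
    rw [smul_sub, hS, smul_smul, mul_inv_cancel₀ hψ.ne', one_smul, psiMap,
      ← (summable_coefF x v).tsum_smul_const v, ← hsum2.tsum_sub hsum3]
    exact tsum_congr fun k => (smul_sub _ _ _).symm
  have hnn : psiMap x v * ‖v - sumMap x hx1 (coefMap x v)‖
      = ‖∑' k, coefF x v k • (v - x k)‖ := by
    rw [← hw, norm_smul, Real.norm_eq_abs, abs_of_pos hψ]
  have heq : ‖v - sumMap x hx1 (coefMap x v)‖
      = (psiMap x v)⁻¹ * ‖∑' k, coefF x v k • (v - x k)‖ := by
    rw [← hnn, ← mul_assoc, inv_mul_cancel₀ hψ.ne', one_mul]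
  rw [heq]
  have hnorm : ‖∑' k, coefF x v k • (v - x k)‖ ≤ psiMap x v * 2⁻¹ := by
    calc ‖∑' k, coefF x v k • (v - x k)‖ ≤ ∑' k, ‖coefF x v k • (v - x k)‖ :=
          norm_tsum_le_tsum_norm hsum1n
      _ ≤ ∑' k, coefF x v k * 2⁻¹ := by
          apply Summable.tsum_le_tsum _ hsum1n ((summable_coefF x v).mul_right 2⁻¹)
          intro k
          rw [norm_smul, Real.norm_eq_abs, abs_of_nonneg (coefF_nonneg x v k)]
          exact hpt k
      _ = psiMap x v * 2⁻¹ := by rw [tsum_mul_right, psiMap]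
  calc (psiMap x v)⁻¹ * ‖∑' k, coefF x v k • (v - x k)‖
      ≤ (psiMap x v)⁻¹ * (psiMap x v * 2⁻¹) :=
        mul_le_mul_of_nonneg_left hnorm (by positivity)
    _ = 2⁻¹ := by rw [← mul_assoc, inv_mul_cancel₀ hψ.ne', one_mul]

/-- The iterated residuals. -/
noncomputable def iterMap (hx1 : ∀ k, ‖x k‖ ≤ 1) (v : B) : ℕ → B
  | 0 => v
  | n + 1 => (2 : ℝ) • (iterMap hx1 v n - sumMap x hx1 (coefMap x (iterMap hx1 v n)))

lemma norm_iterMap_le (hd : closure (Set.range x) = Metric.closedBall (0 : B) 1)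
    (hx1 : ∀ k, ‖x k‖ ≤ 1) (v : B) (hv : ‖v‖ ≤ 1) (n : ℕ) :
    ‖iterMap x hx1 v n‖ ≤ 1 := by
  induction n with
  | zero => exact hv
  | succ n ih =>
    have := key_step x hd hx1 (iterMap x hx1 v n) ih
    rw [iterMap, norm_smul, Real.norm_eq_abs]
    rw [abs_of_pos (by norm_num : (0:ℝ) < 2)]
    linarith

lemma continuous_iterMap (hd : closure (Set.range x) = Metric.closedBall (0 : B) 1)
    (hx1 : ∀ k, ‖x k‖ ≤ 1) (n : ℕ) :
    Continuous fun v => iterMap x hx1 v n := by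
  induction n with
  | zero => exact continuous_id
  | succ n ih =>
    exact continuous_const.smul
      (ih.sub ((sumMap x hx1).continuous.comp ((continuous_coefMap x hd).comp ih)))

/-- The coefficient map on the unit ball. -/
noncomputable def T0 (hx1 : ∀ k, ‖x k‖ ≤ 1) (v : B) : lp (fun _ : ℕ => ℝ) 1 :=
  ∑' n, ((2 : ℝ) ^ n)⁻¹ • coefMap x (iterMap x hx1 v n)

lemma summable_T0_terms (hd : closure (Set.range x) = Metric.closedBall (0 : B) 1)
    (hx1 : ∀ k, ‖x k‖ ≤ 1) (v : B) :
    Summable fun n => ((2 : ℝ) ^ n)⁻¹ • coefMap x (iterMap x hx1 v n) := by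
  apply Summable.of_norm
  apply Summable.of_nonneg_of_le (fun n => norm_nonneg _) _ summable_geom_inv
  intro n
  rw [norm_smul, norm_coefMap x hd, mul_one, norm_inv, Real.norm_eq_abs,
    abs_of_pos (by positivity : (0:ℝ) < 2 ^ n)]

lemma continuous_T0 (hd : closure (Set.range x) = Metric.closedBall (0 : B) 1)
    (hx1 : ∀ k, ‖x k‖ ≤ 1) : Continuous (T0 x hx1) := by
  apply continuous_tsum
    (fun n => continuous_const.fun_smul
      ((continuous_coefMap x hd).comp (continuous_iterMap x hd hx1 n)))
    summable_geom_inv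
  intro n v
  rw [norm_smul, Function.comp_apply, norm_coefMap x hd, mul_one, norm_inv,
    Real.norm_eq_abs, abs_of_pos (by positivity : (0:ℝ) < 2 ^ n)]

lemma sumMap_T0 (hd : closure (Set.range x) = Metric.closedBall (0 : B) 1)
    (hx1 : ∀ k, ‖x k‖ ≤ 1) (v : B) (hv : ‖v‖ ≤ 1) :
    sumMap x hx1 (T0 x hx1 v) = v := by
  set g : ℕ → B := fun n => ((2 : ℝ) ^ n)⁻¹ • iterMap x hx1 v n with hg
  have hterm : ∀ n, ((2 : ℝ) ^ n)⁻¹ • sumMap x hx1 (coefMap x (iterMap x hx1 v n))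
      = g n - g (n + 1) := by
    intro n
    have hrec : sumMap x hx1 (coefMap x (iterMap x hx1 v n))
        = iterMap x hx1 v n - (2 : ℝ)⁻¹ • iterMap x hx1 v (n + 1) := by
      rw [iterMap, smul_smul]
      norm_num
    rw [hrec, smul_sub]
    simp only [hg]
    congr 1
    rw [smul_smul, ← mul_inv, ← pow_succ]
  have hsum := summable_T0_terms x hd hx1 v
  have hmap : sumMap x hx1 (T0 x hx1 v)
      = ∑' n, ((2 : ℝ) ^ n)⁻¹ • sumMap x hx1 (coefMap x (iterMap x hx1 v n)) := by
    rw [T0, (sumMap x hx1).map_tsum hsum]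
    exact tsum_congr fun n => (sumMap x hx1).map_smul _ _
  rw [hmap]
  have hsum2 : Summable fun n => g n - g (n + 1) := by
    have : (fun n => g n - g (n + 1))
        = fun n => ((2 : ℝ) ^ n)⁻¹ • sumMap x hx1 (coefMap x (iterMap x hx1 v n)) := by
      funext n; exact (hterm n).symm
    rw [this]
    have hm := hsum.map (sumMap x hx1) (sumMap x hx1).continuous
    simpa [Function.comp_def, map_smul] using hm
  have htends : Tendsto (fun n => ∑ i ∈ Finset.range n, (g i - g (i + 1))) atTop (nhds v) := by
    have heq : ∀ n, ∑ i ∈ Finset.range n, (g i - g (i + 1)) = g 0 - g n := fun n =>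
      Finset.sum_range_sub' g n
    simp only [heq]
    have hg0 : g 0 = v := by simp [hg, iterMap]
    have hgn : Tendsto g atTop (nhds 0) := by
      apply squeeze_zero_norm (fun n => ?_) (tendsto_pow_atTop_nhds_zero_of_lt_one
        (by norm_num : (0:ℝ) ≤ 2⁻¹) (by norm_num : (2:ℝ)⁻¹ < 1))
      rw [hg, norm_smul, norm_inv, Real.norm_eq_abs,
        abs_of_pos (by positivity : (0:ℝ) < 2 ^ n)]
      calc ((2:ℝ) ^ n)⁻¹ * ‖iterMap x hx1 v n‖ ≤ ((2:ℝ) ^ n)⁻¹ * 1 :=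
            mul_le_mul_of_nonneg_left (norm_iterMap_le x hd hx1 v hv n) (by positivity)
        _ = (2⁻¹ : ℝ) ^ n := by rw [mul_one, inv_pow]
    rw [hg0]
    have := tendsto_const_nhds.sub hgn (f := fun _ : ℕ => v)
    simpa using this
  have := tendsto_nhds_unique hsum2.hasSum.tendsto_sum_nat htends
  calc ∑' n, ((2 : ℝ) ^ n)⁻¹ • sumMap x hx1 (coefMap x (iterMap x hx1 v n))
      = ∑' n, (g n - g (n + 1)) := tsum_congr hterm
    _ = v := this

end Aux

/-- Any sequence of nonzero vectors dense in the closed unit ball of a separable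
Banach space is a pseudo-basis whose coefficients depend homeomorphically on the
point, through a map into `ℓ¹`. -/
theorem dense_in_ball_pseudo_basis
    {B : Type*} [NormedAddCommGroup B] [NormedSpace ℝ B] [CompleteSpace B]
    [TopologicalSpace.SeparableSpace B]
    (x : ℕ → B) (hx : ∀ k, x k ≠ 0)
    (hdense : closure (Set.range x) = Metric.closedBall (0 : B) 1) :
    ∃ T : B → lp (fun _ : ℕ => ℝ) 1,
      Function.Injective T ∧ Topology.IsEmbedding T ∧
      ∀ v : B, Tendsto (fun n => ∑ k ∈ Finset.range n, T v k • x k) atTop (nhds v) := by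
  have hx1 : ∀ k, ‖x k‖ ≤ 1 := by
    intro k
    have : x k ∈ closure (Set.range x) := subset_closure (Set.mem_range_self k)
    rw [hdense, Metric.mem_closedBall, dist_zero_right] at this
    exact this
  set S := sumMap x hx1 with hS
  set T : B → lp (fun _ : ℕ => ℝ) 1 :=
    fun v => (max ‖v‖ 1) • T0 x hx1 (ballRetr v) with hT
  have hST : ∀ v, S (T v) = v := by
    intro v
    rw [hT]
    simp only
    rw [map_smul, sumMap_T0 x hdense hx1 (ballRetr v) (norm_ballRetr_le v),
      ballRetr, smul_smul, mul_inv_cancel₀ (maxnorm_pos v).ne', one_smul]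
  have hTcont : Continuous T := by
    apply (continuous_norm.max continuous_const).smul
    exact (continuous_T0 x hdense hx1).comp continuous_ballRetr
  refine ⟨T, ?_, ?_, ?_⟩
  · intro a b hab
    have := congrArg S hab
    rwa [hST, hST] at this
  · exact Function.LeftInverse.isEmbedding hST S.continuous hTcont
  · intro v
    have hsum : Summable fun k => T v k • x k := summable_smul_x x hx1 (T v)
    have : HasSum (fun k => T v k • x k) v := by
      have h := hsum.hasSum
      rwa [show ∑' k, T v k • x k = v from by rw [← sumMap_apply x hx1 (T v), ← hS, hST]] at h
    exact this.tendsto_sum_nat
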